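/- arXiv:2310.19007 — 2 statements merged into one kernel-verified Lean document; each statement's English description precedes it below -/
import Mathlib

section
/- If Φ(s) > 2·r(s,a) for all actions a and Φ(s) > 0, then in the single-step bandit the variance of the potential-shaped update ψ(A)(r(s,A)−Φ(s)) is at least the variance of the unshaped update ψ(A)r(s,A). -/
/-- If `Φ(s) > 2 r(s,a)` for all actions and `Φ(s) > 0`, then the variance of the
potential-shaped update is at least the variance of the unshaped update. -/
theorem shaped_variance_ge {𝒜 : Type*} [Fintype 𝒜]
    (π ψ r : 𝒜 → ℝ) (Φ : ℝ)
    (hπ0 : ∀ a, 0 ≤ π a) (hπ1 : ∑ a, π a = 1)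
    (hψ : ∑ a, π a * ψ a = 0)
    (hψnz : ∃ a, 0 < π a ∧ ψ a ≠ 0)
    (hΦ : 0 < Φ)
    (hr : ∀ a, 2 * r a < Φ) :
    (∑ a, π a * (ψ a * (r a - Φ)) ^ 2) - (∑ a, π a * (ψ a * (r a - Φ))) ^ 2
      ≥ (∑ a, π a * (ψ a * r a) ^ 2) - (∑ a, π a * (ψ a * r a)) ^ 2 := by
  have hmean : (∑ a, π a * (ψ a * (r a - Φ))) = ∑ a, π a * (ψ a * r a) := by
    have h : (∑ a, π a * (ψ a * (r a - Φ)))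
        = (∑ a, π a * (ψ a * r a)) - Φ * ∑ a, π a * ψ a := by
      rw [Finset.mul_sum, ← Finset.sum_sub_distrib]
      exact Finset.sum_congr rfl (fun a _ => by ring)
    rw [h, hψ]; ring
  rw [hmean]
  have hterm : ∀ a ∈ Finset.univ, π a * (ψ a * r a) ^ 2 ≤ π a * (ψ a * (r a - Φ)) ^ 2 := by
    intro a _
    have h1 : (ψ a * r a) ^ 2 ≤ (ψ a * (r a - Φ)) ^ 2 := by
      nlinarith [mul_nonneg (sq_nonneg (ψ a)) (mul_nonneg hΦ.le (by linarith [hr a] : (0:ℝ) ≤ Φ - 2 * r a))]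
    exact mul_le_mul_of_nonneg_left h1 (hπ0 a)
  linarith [Finset.sum_le_sum hterm]
end

section
/- Tower-property decomposition of the policy gradient: for a finite-horizon trajectory distribution, E[∑_{t=0}^T γ^t ψ(S_t,A_t) ∑_{j=t}^T γ^{j−t} r(S_j,A_j)] = E[∑_{t=0}^T γ^t ψ(S_t,A_t) q(S_t,A_t)], where q(s,a) := E[∑_{j=t}^T γ^{j−t} r(S_j,A_j) | S_t = s, A_t = a] and the conditional expectation is time-homogeneous by the Markov property. -/
/-- Tower-property decomposition of the policy gradient over a finite trajectory space:
if `q(s,a)` is the (time-homogeneous) conditional expectation of the discounted return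
from time `t` given `(S_t,A_t) = (s,a)` (stated here without division as
`E[1{(S_t,A_t)=(s,a)} G_t] = q(s,a) · P((S_t,A_t)=(s,a))`), then
`E[∑_t γ^t ψ(S_t,A_t) ∑_{j=t}^T γ^{j−t} r(S_j,A_j)] = E[∑_t γ^t ψ(S_t,A_t) q(S_t,A_t)]`. -/
theorem tower_policy_gradient {S A Ω : Type*} [Fintype S] [Fintype A] [Fintype Ω]
    [DecidableEq S] [DecidableEq A]
    (T : ℕ) (γ : ℝ) (hγ0 : 0 ≤ γ) (hγ1 : γ ≤ 1)
    (p : Ω → ℝ) (hp : ∀ ω, 0 ≤ p ω) (hp1 : ∑ ω, p ω = 1)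
    (traj : Ω → ℕ → S × A) (r ψ q : S → A → ℝ)
    (hq : ∀ t ∈ Finset.range (T + 1), ∀ s a,
      ∑ ω ∈ Finset.univ.filter (fun ω => traj ω t = (s, a)),
          p ω * ∑ j ∈ Finset.Icc t T, γ ^ (j - t) * r (traj ω j).1 (traj ω j).2
        = q s a * ∑ ω ∈ Finset.univ.filter (fun ω => traj ω t = (s, a)), p ω) :
    ∑ ω, p ω * ∑ t ∈ Finset.range (T + 1),
        γ ^ t * ψ (traj ω t).1 (traj ω t).2 *
          ∑ j ∈ Finset.Icc t T, γ ^ (j - t) * r (traj ω j).1 (traj ω j).2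
      = ∑ ω, p ω * ∑ t ∈ Finset.range (T + 1),
          γ ^ t * ψ (traj ω t).1 (traj ω t).2 * q (traj ω t).1 (traj ω t).2 := by
  have swap : ∀ f : Ω → ℕ → ℝ, (∑ ω, p ω * ∑ t ∈ Finset.range (T + 1), f ω t)
      = ∑ t ∈ Finset.range (T + 1), ∑ ω, p ω * f ω t := by
    intro f
    simp_rw [Finset.mul_sum]
    exact Finset.sum_comm
  rw [swap, swap]
  refine Finset.sum_congr rfl fun t ht => ?_
  have h1 : ∀ ω : Ω, p ω * (γ ^ t * ψ (traj ω t).1 (traj ω t).2 *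
      ∑ j ∈ Finset.Icc t T, γ ^ (j - t) * r (traj ω j).1 (traj ω j).2)
      = γ ^ t * ψ (traj ω t).1 (traj ω t).2 *
        (p ω * ∑ j ∈ Finset.Icc t T, γ ^ (j - t) * r (traj ω j).1 (traj ω j).2) := by
    intro ω; ring
  have h2 : ∀ ω : Ω, p ω * (γ ^ t * ψ (traj ω t).1 (traj ω t).2 * q (traj ω t).1 (traj ω t).2)
      = γ ^ t * ψ (traj ω t).1 (traj ω t).2 * q (traj ω t).1 (traj ω t).2 * p ω := by
    intro ω; ring
  simp only [h1, h2]
  rw [← Finset.sum_fiberwise (g := fun ω => traj ω t) (s := Finset.univ),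
      ← Finset.sum_fiberwise (g := fun ω => traj ω t) (s := Finset.univ)]
  refine Finset.sum_congr rfl fun sa _ => ?_
  obtain ⟨s, a⟩ := sa
  have key := hq t ht s a
  calc ∑ ω ∈ Finset.univ.filter (fun ω => traj ω t = (s, a)),
        γ ^ t * ψ (traj ω t).1 (traj ω t).2 *
          (p ω * ∑ j ∈ Finset.Icc t T, γ ^ (j - t) * r (traj ω j).1 (traj ω j).2)
      = γ ^ t * ψ s a * ∑ ω ∈ Finset.univ.filter (fun ω => traj ω t = (s, a)),
          p ω * ∑ j ∈ Finset.Icc t T, γ ^ (j - t) * r (traj ω j).1 (traj ω j).2 := by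
        rw [Finset.mul_sum]
        refine Finset.sum_congr rfl fun ω hω => ?_
        rw [Finset.mem_filter] at hω
        rw [hω.2]
    _ = γ ^ t * ψ s a * (q s a * ∑ ω ∈ Finset.univ.filter (fun ω => traj ω t = (s, a)), p ω) := by
        rw [key]
    _ = ∑ ω ∈ Finset.univ.filter (fun ω => traj ω t = (s, a)),
          γ ^ t * ψ (traj ω t).1 (traj ω t).2 * q (traj ω t).1 (traj ω t).2 * p ω := by
        rw [Finset.mul_sum, Finset.mul_sum]
        refine Finset.sum_congr rfl fun ω hω => ?_
        rw [Finset.mem_filter] at hω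
        rw [hω.2]; ring
end
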